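/- Liquidation value bound: if α > 0 satisfies φ(R + γΔ − αeₙ) = φ(R) with Δ ≥ 0, Δₙ = 0, then α ≤ γpᵀΔ where p = ∇φ(R)/∇φ(R)ₙ. -/

import Mathlib

open Set

/-- Supergradient inequality: a concave differentiable function lies below its tangent. -/
lemma concave_grad_ineq {E : Type*} [NormedAddCommGroup E] [InnerProductSpace ℝ E] [CompleteSpace E]
    {S : Set E} {φ : E → ℝ} (hconc : ConcaveOn ℝ S φ)
    {x y : E} (hx : x ∈ S) (hy : y ∈ S) {G : E}
    (hG : HasGradientAt φ G x) :
    φ y ≤ φ x + inner ℝ G (y - x) := by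
  set v := y - x with hv
  have hline : ∀ t : ℝ, t ∈ Icc (0:ℝ) 1 → x + t • v ∈ S := by
    intro t ht
    have := hconc.1 hx hy (by linarith [ht.1, ht.2] : (0:ℝ) ≤ 1 - t) ht.1 (by ring)
    convert this using 1
    simp [hv, smul_sub]
    module
  set f : ℝ → ℝ := fun t => -φ (x + t • v) with hf
  have hfc : ConvexOn ℝ (Icc (0:ℝ) 1) f := by
    refine ⟨convex_Icc 0 1, ?_⟩
    intro a ha b hb p q hp hq hpq
    have := hconc.2 (hline a ha) (hline b hb) hp hq hpq
    simp only [hf, neg_add_rev, smul_neg]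
    have harg : p • (x + a • v) + q • (x + b • v) = x + (p * a + q * b) • v := by
      rw [smul_add, smul_add, smul_smul, smul_smul]
      have : p • x + q • x = x := by rw [← add_smul, hpq, one_smul]
      rw [add_add_add_comm, this, add_smul]
    rw [harg] at this
    simp only [smul_eq_mul] at this ⊢
    linarith
  have hderiv : HasDerivAt f (-(inner ℝ G v : ℝ)) 0 := by
    have hl : HasDerivAt (fun t : ℝ => x + t • v) v 0 := by
      simpa using ((hasDerivAt_id (0:ℝ)).smul_const v).const_add x
    have hG' : HasFDerivAt φ ((InnerProductSpace.toDual ℝ E) G) (x + (0:ℝ) • v) := by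
      simpa [hasGradientAt_iff_hasFDerivAt] using hG
    have := (hG'.comp_hasDerivAt 0 hl).neg
    exact this
  have hslope := hfc.le_slope_of_hasDerivAt (by simp : (0:ℝ) ∈ Icc (0:ℝ) 1)
    (by simp : (1:ℝ) ∈ Icc (0:ℝ) 1) one_pos hderiv
  have : -(inner ℝ G v : ℝ) ≤ f 1 - f 0 := by
    simpa [slope_def_field] using hslope
  simp only [hf, one_smul, zero_smul, add_zero] at this
  have hxy : x + v = y := by simp [hv]
  rw [hxy] at this
  linarith

/-- Liquidation value bound: if `α > 0` satisfies `φ(R + γΔ − αeₙ) = φ(R)` with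
`Δ ≥ 0`, `Δₙ = 0`, then `α ≤ γ·pᵀΔ` where `p = ∇φ(R)/∇φ(R)ₙ`. -/
theorem liquidation_value_bound {n : ℕ}
    (φ : EuclideanSpace ℝ (Fin (n + 1)) → ℝ)
    (g : EuclideanSpace ℝ (Fin (n + 1)) → EuclideanSpace ℝ (Fin (n + 1)))
    (hconc : ConcaveOn ℝ {x : EuclideanSpace ℝ (Fin (n + 1)) | ∀ i, 0 ≤ x i} φ)
    (hgrad : ∀ x, (∀ i, 0 ≤ x i) → HasGradientAt φ (g x) x)
    (hmono : ∀ x y : EuclideanSpace ℝ (Fin (n + 1)), (∀ i, x i ≤ y i) → φ x ≤ φ y)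
    (γ : ℝ) (hγ : γ ∈ Set.Ioc (0 : ℝ) 1)
    (R Δ : EuclideanSpace ℝ (Fin (n + 1)))
    (hR : ∀ i, 0 ≤ R i) (hΔ : ∀ i, 0 ≤ Δ i) (hΔn : Δ (Fin.last n) = 0)
    (hgn : 0 < g R (Fin.last n))
    (α : ℝ) (hα : 0 < α)
    (hdom : ∀ i, 0 ≤ (R + γ • Δ - α • EuclideanSpace.single (Fin.last n) (1 : ℝ)) i)
    (hvalid : φ (R + γ • Δ - α • EuclideanSpace.single (Fin.last n) (1 : ℝ)) = φ R) :
    α ≤ γ * ∑ i, (g R i / g R (Fin.last n)) * Δ i := by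
  set y := R + γ • Δ - α • EuclideanSpace.single (Fin.last n) (1 : ℝ) with hy
  have key := concave_grad_ineq hconc (x := R) (y := y) hR hdom (hgrad R hR)
  rw [hvalid] at key
  have hinner : (0:ℝ) ≤ inner ℝ (g R) (y - R) := by linarith
  have hyR : ∀ i, (y - R) i = γ * Δ i - α * EuclideanSpace.single (Fin.last n) (1:ℝ) i := by
    intro i
    simp [hy]
    ring
  have hsum : (inner ℝ (g R) (y - R) : ℝ)
      = γ * (∑ i, g R i * Δ i) - α * g R (Fin.last n) := by
    have h1 : (inner ℝ (g R) (y - R) : ℝ) = ∑ i, g R i * (y - R) i := by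
      rw [real_inner_comm, PiLp.inner_apply]
      simp [mul_comm]
    rw [h1]
    have h2 : ∀ i, g R i * (y - R) i
        = γ * (g R i * Δ i) - α * (g R i * EuclideanSpace.single (Fin.last n) (1:ℝ) i) := by
      intro i; rw [hyR i]; ring
    rw [Finset.sum_congr rfl (fun i _ => h2 i), Finset.sum_sub_distrib,
      ← Finset.mul_sum, ← Finset.mul_sum]
    have h3 : ∑ i, g R i * EuclideanSpace.single (Fin.last n) (1:ℝ) i = g R (Fin.last n) := by
      simp [EuclideanSpace.single_apply]
    rw [h3]
  rw [hsum] at hinner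
  have hrhs : ∑ i, (g R i / g R (Fin.last n)) * Δ i
      = (∑ i, g R i * Δ i) / g R (Fin.last n) := by
    rw [Finset.sum_div]
    exact Finset.sum_congr rfl fun i _ => by rw [div_mul_eq_mul_div]
  rw [hrhs, mul_div_assoc' , le_div_iff₀ hgn]
  nlinarith
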